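/- arXiv:0808.2279 — 2 statements merged into one kernel-verified Lean document; each statement's English description precedes it below -/
import Mathlib

section
/- The map φ: ℝ² → ℝ³ defined by φ(x,y) = (R·cos(x/R), R·sin(x/R), y) satisfies: (a) φ is conformal with respect to the metric g = e^{y/R}(dx² + dy²), with φ*⟨,⟩₀ = λ²g where λ² = e^{−y/R}; (b) each component φ^σ satisfies ∂²/∂z̄∂z (λ⁻²·∂φ_z^σ/∂z̄) = 0 where φ_z = (φ_x − i·φ_y)/2; and (c) φ_z is not holomorphic, i.e. ∂φ_z/∂z̄ ≠ 0. -/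
open Complex

noncomputable def pdx {E : Type*} [NormedAddCommGroup E] [NormedSpace ℝ E]
    (f : ℝ × ℝ → E) (p : ℝ × ℝ) : E := deriv (fun t => f (t, p.2)) p.1

noncomputable def pdy {E : Type*} [NormedAddCommGroup E] [NormedSpace ℝ E]
    (f : ℝ × ℝ → E) (p : ℝ × ℝ) : E := deriv (fun t => f (p.1, t)) p.2

/-- ∂/∂z = (∂/∂x − i∂/∂y)/2. -/
noncomputable def wz (f : ℝ × ℝ → ℂ) (p : ℝ × ℝ) : ℂ :=
  (pdx f p - Complex.I * pdy f p) / 2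

/-- ∂/∂z̄ = (∂/∂x + i∂/∂y)/2. -/
noncomputable def wzbar (f : ℝ × ℝ → ℂ) (p : ℝ × ℝ) : ℂ :=
  (pdx f p + Complex.I * pdy f p) / 2

/-! ### Auxiliary machinery -/

/-- The family of functions `c e^{sy/R} cos(x/R) + d e^{sy/R} sin(x/R)` which is closed
under the Wirtinger-type operators `wz`, `wzbar`. -/
noncomputable def Faux (R : ℝ) (c d : ℂ) (s : ℝ) : ℝ × ℝ → ℂ :=
  fun q => c * ((Real.exp (s * q.2 / R) : ℝ) : ℂ) * ((Real.cos (q.1 / R) : ℝ) : ℂ)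
         + d * ((Real.exp (s * q.2 / R) : ℝ) : ℂ) * ((Real.sin (q.1 / R) : ℝ) : ℂ)

lemma hd_div (R x : ℝ) : HasDerivAt (fun t : ℝ => t / R) (1 / R) x := by
  simpa using (hasDerivAt_id x).div_const R

lemma hd_cosR (R x : ℝ) :
    HasDerivAt (fun t : ℝ => Real.cos (t / R)) (-Real.sin (x / R) / R) x := by
  simpa [div_eq_mul_inv, mul_comm, Function.comp_def] using (Real.hasDerivAt_cos (x / R)).comp x (hd_div R x)

lemma hd_sinR (R x : ℝ) :
    HasDerivAt (fun t : ℝ => Real.sin (t / R)) (Real.cos (x / R) / R) x := by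
  simpa [div_eq_mul_inv, mul_comm, Function.comp_def] using (Real.hasDerivAt_sin (x / R)).comp x (hd_div R x)

lemma hd_cosC (R x : ℝ) :
    HasDerivAt (fun t : ℝ => ((Real.cos (t / R) : ℝ) : ℂ))
      ((-Real.sin (x / R) / R : ℝ) : ℂ) x := (hd_cosR R x).ofReal_comp

lemma hd_sinC (R x : ℝ) :
    HasDerivAt (fun t : ℝ => ((Real.sin (t / R) : ℝ) : ℂ))
      ((Real.cos (x / R) / R : ℝ) : ℂ) x := (hd_sinR R x).ofReal_comp

lemma hd_expC (R s x : ℝ) :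
    HasDerivAt (fun t : ℝ => ((Real.exp (s * t / R) : ℝ) : ℂ))
      ((s / R * Real.exp (s * x / R) : ℝ) : ℂ) x := by
  have h0 : HasDerivAt (fun t : ℝ => s * t / R) (s / R) x := by
    simpa [mul_div_assoc] using ((hasDerivAt_id x).const_mul s).div_const R
  have h : HasDerivAt (fun t : ℝ => Real.exp (s * t / R)) (s / R * Real.exp (s * x / R)) x := by
    simpa [mul_comm, Function.comp_def] using (Real.hasDerivAt_exp (s * x / R)).comp x h0
  exact h.ofReal_comp

lemma pdx_Faux (R : ℝ) (c d : ℂ) (s : ℝ) (p : ℝ × ℝ) :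
    pdx (Faux R c d s) p = Faux R (d / R) (-c / R) s p := by
  have h : HasDerivAt (fun t => Faux R c d s (t, p.2))
      ((c * ((Real.exp (s * p.2 / R) : ℝ) : ℂ)) * ((-Real.sin (p.1 / R) / R : ℝ) : ℂ)
        + (d * ((Real.exp (s * p.2 / R) : ℝ) : ℂ)) * ((Real.cos (p.1 / R) / R : ℝ) : ℂ)) p.1 := by
    simpa [Faux, mul_assoc, Pi.add_def] using
      ((hd_cosC R p.1).const_mul (c * ((Real.exp (s * p.2 / R) : ℝ) : ℂ))).add
        ((hd_sinC R p.1).const_mul (d * ((Real.exp (s * p.2 / R) : ℝ) : ℂ)))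
  rw [pdx, h.deriv, Faux]
  push_cast
  ring

lemma pdy_Faux (R : ℝ) (c d : ℂ) (s : ℝ) (p : ℝ × ℝ) :
    pdy (Faux R c d s) p = Faux R ((s : ℂ) * c / R) ((s : ℂ) * d / R) s p := by
  have h : HasDerivAt (fun t => Faux R c d s (p.1, t))
      (c * ((s / R * Real.exp (s * p.2 / R) : ℝ) : ℂ) * ((Real.cos (p.1 / R) : ℝ) : ℂ)
        + d * ((s / R * Real.exp (s * p.2 / R) : ℝ) : ℂ) * ((Real.sin (p.1 / R) : ℝ) : ℂ)) p.2 := by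
    simpa [Faux, Pi.add_def] using
      (((hd_expC R s p.2).const_mul c).mul_const ((Real.cos (p.1 / R) : ℝ) : ℂ)).add
        (((hd_expC R s p.2).const_mul d).mul_const ((Real.sin (p.1 / R) : ℝ) : ℂ))
  rw [pdy, h.deriv, Faux]
  push_cast
  ring

lemma wz_Faux (R : ℝ) (c d : ℂ) (s : ℝ) :
    wz (Faux R c d s) = Faux R ((d - Complex.I * ((s : ℂ) * c)) / (2 * R))
      ((-c - Complex.I * ((s : ℂ) * d)) / (2 * R)) s := by
  funext p
  rw [wz, pdx_Faux, pdy_Faux]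
  simp only [Faux]
  ring

lemma wzbar_Faux (R : ℝ) (c d : ℂ) (s : ℝ) :
    wzbar (Faux R c d s) = Faux R ((d + Complex.I * ((s : ℂ) * c)) / (2 * R))
      ((-c + Complex.I * ((s : ℂ) * d)) / (2 * R)) s := by
  funext p
  rw [wzbar, pdx_Faux, pdy_Faux]
  simp only [Faux]
  ring

lemma exp_mul_Faux (R : ℝ) (c d : ℂ) :
    (fun q : ℝ × ℝ => ((Real.exp (q.2 / R) : ℝ) : ℂ) * Faux R c d 0 q) = Faux R c d 1 := by
  funext q
  simp only [Faux, zero_mul, zero_div, Real.exp_zero, one_mul, ofReal_one]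
  push_cast
  ring

/-- φ(x,y) = (R cos(x/R), R sin(x/R), y) is (a) conformal with respect to
g = e^{y/R}(dx²+dy²) with φ*⟨,⟩₀ = λ²g, λ² = e^{−y/R}; (b) satisfies the Weierstrass-type
biharmonicity condition ∂²/∂z̄∂z (λ⁻²·∂φ_z^σ/∂z̄) = 0; and (c) φ_z is not holomorphic. -/
theorem stmt_7 (R : ℝ) (hR : 0 < R) (φ : ℝ × ℝ → Fin 3 → ℝ)
    (hφ : ∀ p : ℝ × ℝ,
      φ p = ![R * Real.cos (p.1 / R), R * Real.sin (p.1 / R), p.2]) :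
    (∀ p : ℝ × ℝ,
        (∑ σ, (pdx (fun q => φ q σ) p) ^ 2) = Real.exp (-(p.2 / R)) * Real.exp (p.2 / R)
        ∧ (∑ σ, (pdy (fun q => φ q σ) p) ^ 2) = Real.exp (-(p.2 / R)) * Real.exp (p.2 / R)
        ∧ (∑ σ, pdx (fun q => φ q σ) p * pdy (fun q => φ q σ) p) = 0)
    ∧ (∀ (p : ℝ × ℝ) (σ : Fin 3),
        wzbar (wz (fun q => ((Real.exp (q.2 / R) : ℝ) : ℂ)
          * wzbar (wz (fun r => ((φ r σ : ℝ) : ℂ))) q)) p = 0)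
    ∧ (∃ (p : ℝ × ℝ) (σ : Fin 3),
        wzbar (wz (fun r => ((φ r σ : ℝ) : ℂ))) p ≠ 0) := by
  have hR0 : R ≠ 0 := hR.ne'
  have hRC : (R : ℂ) ≠ 0 := by exact_mod_cast hR0
  -- the three components
  have hc0 : (fun q : ℝ × ℝ => φ q 0) = fun q : ℝ × ℝ => R * Real.cos (q.1 / R) :=
    funext fun q => by rw [hφ]; simp
  have hc1 : (fun q : ℝ × ℝ => φ q 1) = fun q : ℝ × ℝ => R * Real.sin (q.1 / R) :=
    funext fun q => by rw [hφ]; simp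
  have hc2 : (fun q : ℝ × ℝ => φ q 2) = fun q : ℝ × ℝ => q.2 :=
    funext fun q => by rw [hφ]; simp
  -- complex versions in the Faux family
  have hf0 : (fun r : ℝ × ℝ => ((φ r 0 : ℝ) : ℂ)) = Faux R (R : ℂ) 0 0 := by
    funext r
    rw [hφ]
    simp only [Matrix.cons_val_zero, Faux, zero_mul, zero_div, Real.exp_zero, ofReal_one, mul_one]
    push_cast
    ring
  have hf1 : (fun r : ℝ × ℝ => ((φ r 1 : ℝ) : ℂ)) = Faux R 0 (R : ℂ) 0 := by
    funext r
    rw [hφ]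
    simp only [Matrix.cons_val_one, Matrix.head_cons, Faux, zero_mul, zero_div, Real.exp_zero, ofReal_one, mul_one]
    push_cast
    ring
  -- real partial derivatives
  have px0 : ∀ p : ℝ × ℝ, pdx (fun q : ℝ × ℝ => R * Real.cos (q.1 / R)) p
      = -Real.sin (p.1 / R) := by
    intro p
    rw [pdx, (((hd_cosR R p.1).const_mul R)).deriv]
    field_simp
    try ring
  have px1 : ∀ p : ℝ × ℝ, pdx (fun q : ℝ × ℝ => R * Real.sin (q.1 / R)) p
      = Real.cos (p.1 / R) := by
    intro p
    rw [pdx, (((hd_sinR R p.1).const_mul R)).deriv]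
    field_simp
    try ring
  have px2 : ∀ p : ℝ × ℝ, pdx (fun q : ℝ × ℝ => q.2) p = 0 := by
    intro p; rw [pdx]; simp
  have py0 : ∀ p : ℝ × ℝ, pdy (fun q : ℝ × ℝ => R * Real.cos (q.1 / R)) p = 0 := by
    intro p; rw [pdy]; simp
  have py1 : ∀ p : ℝ × ℝ, pdy (fun q : ℝ × ℝ => R * Real.sin (q.1 / R)) p = 0 := by
    intro p; rw [pdy]; simp
  have py2 : ∀ p : ℝ × ℝ, pdy (fun q : ℝ × ℝ => q.2) p = 1 := by
    intro p; rw [pdy]; simp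
  refine ⟨?_, ?_, ?_⟩
  · -- part (a)
    intro p
    rw [← Real.exp_add, neg_add_cancel, Real.exp_zero]
    refine ⟨?_, ?_, ?_⟩
    · rw [Fin.sum_univ_three, hc0, hc1, hc2, px0, px1, px2]
      have := Real.sin_sq_add_cos_sq (p.1 / R)
      nlinarith [this]
    · rw [Fin.sum_univ_three, hc0, hc1, hc2, py0, py1, py2]
      ring
    · rw [Fin.sum_univ_three, hc0, hc1, hc2, px0, px1, px2, py0, py1, py2]
      ring
  · -- part (b)
    intro p σ
    fin_cases σ
    · show wzbar (wz (fun q => ((Real.exp (q.2 / R) : ℝ) : ℂ)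
          * wzbar (wz (fun r => ((φ r 0 : ℝ) : ℂ))) q)) p = 0
      rw [hf0, wz_Faux, wzbar_Faux, exp_mul_Faux, wz_Faux, wzbar_Faux]
      simp only [Faux]
      push_cast
      ring_nf
      simp [Complex.I_sq]
      try ring
    · show wzbar (wz (fun q => ((Real.exp (q.2 / R) : ℝ) : ℂ)
          * wzbar (wz (fun r => ((φ r 1 : ℝ) : ℂ))) q)) p = 0
      rw [hf1, wz_Faux, wzbar_Faux, exp_mul_Faux, wz_Faux, wzbar_Faux]
      simp only [Faux]
      push_cast
      ring_nf
      simp [Complex.I_sq]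
      try ring
    · -- third component: φ² = y
      have hf2 : (fun r : ℝ × ℝ => ((φ r 2 : ℝ) : ℂ)) = fun r : ℝ × ℝ => ((r.2 : ℝ) : ℂ) := by
        funext r; rw [hφ]; simp
      have hwz2 : wz (fun r : ℝ × ℝ => ((r.2 : ℝ) : ℂ)) = fun _ => -Complex.I / 2 := by
        funext q
        rw [wz, pdx, pdy]
        have h1 : deriv (fun t : ℝ => ((q.2 : ℝ) : ℂ)) q.1 = 0 := deriv_const _ _
        have h2 : deriv (fun t : ℝ => ((t : ℝ) : ℂ)) q.2 = 1 := by
          have := (hasDerivAt_id q.2).ofReal_comp (z := q.2)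
          simpa using this.deriv
        rw [h1, h2]
        ring
      have hwzbar2 : wzbar (fun _ : ℝ × ℝ => -Complex.I / 2) = fun _ => 0 := by
        funext q
        rw [wzbar, pdx, pdy]
        simp
      have hmul : (fun q : ℝ × ℝ => ((Real.exp (q.2 / R) : ℝ) : ℂ)
          * wzbar (wz (fun r : ℝ × ℝ => ((φ r 2 : ℝ) : ℂ))) q) = fun _ => 0 := by
        funext q
        rw [hf2, hwz2, hwzbar2]
        simp
      show wzbar (wz (fun q => ((Real.exp (q.2 / R) : ℝ) : ℂ)
          * wzbar (wz (fun r => ((φ r 2 : ℝ) : ℂ))) q)) p = 0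
      rw [hmul]
      rw [show wz (fun _ : ℝ × ℝ => (0 : ℂ)) = fun _ => 0 from funext fun q => by
        rw [wz, pdx, pdy]; simp]
      rw [wzbar, pdx, pdy]
      simp
  · -- part (c)
    refine ⟨(0, 0), 0, ?_⟩
    rw [hf0, wz_Faux, wzbar_Faux]
    simp only [Faux]
    norm_num
    exact hR0
end

section
/- The map φ: ℝ² → ℝ⁶, φ(x,y) = (R cos(x/R), R sin(x/R), y, R cos(x/R), R sin(x/R), y), satisfies: (a) |φ_x|² = |φ_y|² = 2 and ⟨φ_x, φ_y⟩ = 0 (so φ is conformal with respect to g = e^{y/R}(dx² + dy²) with conformal factor λ² = 2e^{−y/R}); and (b) each component of λ⁻²·∂φ_z/∂z̄ (with φ_z = (φ_x − iφ_y)/2, z = x + iy) is annihilated by ∂²/(∂z̄∂z), while ∂φ_z/∂z̄ ≠ 0. -/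
open Complex

lemma wz_eq (f : ℝ × ℝ → ℂ) {p : ℝ × ℝ} {dx dy : ℂ}
    (hx : HasDerivAt (fun t => f (t, p.2)) dx p.1)
    (hy : HasDerivAt (fun t => f (p.1, t)) dy p.2) :
    wz f p = (dx - Complex.I * dy) / 2 := by
  simp [wz, pdx, pdy, hx.deriv, hy.deriv]

lemma wzbar_eq (f : ℝ × ℝ → ℂ) {p : ℝ × ℝ} {dx dy : ℂ}
    (hx : HasDerivAt (fun t => f (t, p.2)) dx p.1)
    (hy : HasDerivAt (fun t => f (p.1, t)) dy p.2) :
    wzbar f p = (dx + Complex.I * dy) / 2 := by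
  simp [wzbar, pdx, pdy, hx.deriv, hy.deriv]

lemma hd_cos {R : ℝ} (x : ℝ) :
    HasDerivAt (fun t : ℝ => Real.cos (t / R)) (-Real.sin (x / R) / R) x := by
  have := (Real.hasDerivAt_cos (x / R)).comp x ((hasDerivAt_id x).div_const R)
  simpa [div_eq_mul_inv, mul_comm, Function.comp_def] using this

lemma hd_sin {R : ℝ} (x : ℝ) :
    HasDerivAt (fun t : ℝ => Real.sin (t / R)) (Real.cos (x / R) / R) x := by
  have := (Real.hasDerivAt_sin (x / R)).comp x ((hasDerivAt_id x).div_const R)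
  simpa [div_eq_mul_inv, mul_comm, Function.comp_def] using this

lemma hd_exp {R : ℝ} (x : ℝ) :
    HasDerivAt (fun t : ℝ => Real.exp (t / R)) (Real.exp (x / R) / R) x := by
  have := (Real.hasDerivAt_exp (x / R)).comp x ((hasDerivAt_id x).div_const R)
  simpa [div_eq_mul_inv, mul_comm, Function.comp_def] using this

lemma hd_Rcos {R : ℝ} (hR : R ≠ 0) (x : ℝ) :
    HasDerivAt (fun t : ℝ => R * Real.cos (t / R)) (-Real.sin (x / R)) x := by
  have := (hd_cos (R := R) x).const_mul R
  refine this.congr_deriv ?_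
  field_simp

lemma hd_Rsin {R : ℝ} (hR : R ≠ 0) (x : ℝ) :
    HasDerivAt (fun t : ℝ => R * Real.sin (t / R)) (Real.cos (x / R)) x := by
  have := (hd_sin (R := R) x).const_mul R
  refine this.congr_deriv ?_
  field_simp

/-- second-stage computation: wzbar∘wz of ↑(B ·.1) is ↑(B''/4). -/
lemma inner_comp (B B' B'' : ℝ → ℝ)
    (hB : ∀ x, HasDerivAt B (B' x) x) (hB' : ∀ x, HasDerivAt B' (B'' x) x) :
    wzbar (wz (fun r : ℝ × ℝ => ((B r.1 : ℝ) : ℂ))) = fun q => ((B'' q.1 / 4 : ℝ) : ℂ) := by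
  have h1 : wz (fun r : ℝ × ℝ => ((B r.1 : ℝ) : ℂ)) = fun q => ((B' q.1 : ℝ) : ℂ) / 2 := by
    funext q
    rw [wz_eq _ ((hB q.1).ofReal_comp) (hasDerivAt_const q.2 ((B q.1 : ℝ) : ℂ))]
    push_cast; ring
  funext q
  rw [h1, wzbar_eq _ (((hB' q.1).ofReal_comp).div_const 2) (hasDerivAt_const q.2 (((B' q.1 : ℝ) : ℂ) / 2))]
  push_cast; ring

lemma inner_y : wzbar (wz (fun r : ℝ × ℝ => ((r.2 : ℝ) : ℂ))) = fun _ => 0 := by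
  have h1 : wz (fun r : ℝ × ℝ => ((r.2 : ℝ) : ℂ)) = fun _ => -Complex.I / 2 := by
    funext q
    rw [wz_eq _ (hasDerivAt_const q.1 ((q.2 : ℝ) : ℂ)) ((hasDerivAt_id q.2).ofReal_comp)]
    push_cast
    ring
  funext q
  rw [h1, wzbar_eq _ (hasDerivAt_const q.1 (-Complex.I / 2)) (hasDerivAt_const q.2 (-Complex.I / 2))]
  simp

lemma wzbar_wz_zero (p : ℝ × ℝ) : wzbar (wz (fun _ : ℝ × ℝ => (0 : ℂ))) p = 0 := by
  have h1 : wz (fun _ : ℝ × ℝ => (0 : ℂ)) = fun _ => 0 := by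
    funext q
    rw [wz_eq _ (hasDerivAt_const q.1 (0 : ℂ)) (hasDerivAt_const q.2 (0 : ℂ))]
    ring
  rw [h1, wzbar_eq _ (hasDerivAt_const p.1 (0 : ℂ)) (hasDerivAt_const p.2 (0 : ℂ))]
  ring

/-- main biharmonicity computation. -/
lemma main_lem {R : ℝ} (hR : R ≠ 0) (A A' : ℝ → ℝ)
    (hA : ∀ x, HasDerivAt A (A' x) x)
    (hA' : ∀ x, HasDerivAt A' (-A x / R ^ 2) x) (p : ℝ × ℝ) :
    wzbar (wz (fun q : ℝ × ℝ =>
      ((Real.exp (q.2 / R) / 2 : ℝ) : ℂ) * ((A q.1 : ℝ) : ℂ))) p = 0 := by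
  have h3 : wz (fun q : ℝ × ℝ => ((Real.exp (q.2 / R) / 2 : ℝ) : ℂ) * ((A q.1 : ℝ) : ℂ))
      = fun q => ((Real.exp (q.2 / R) : ℝ) : ℂ)
          * (((A' q.1 : ℝ) : ℂ) - Complex.I * ((A q.1 / R : ℝ) : ℂ)) / 4 := by
    funext q
    have hx := HasDerivAt.const_mul (((Real.exp (q.2 / R) / 2 : ℝ) : ℂ))
      ((hA q.1).ofReal_comp)
    have hy := ((((hd_exp (R := R) q.2).div_const 2).ofReal_comp).mul_const
      (((A q.1 : ℝ) : ℂ)))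
    rw [wz_eq _ hx hy]
    push_cast; ring
  rw [h3]
  have hx := ((((hA' p.1).ofReal_comp).sub
      ((((hA p.1).div_const R).ofReal_comp).const_mul Complex.I)).const_mul
      (((Real.exp (p.2 / R) : ℝ) : ℂ))).div_const 4
  have hy := ((((hd_exp (R := R) p.2).ofReal_comp).mul_const
      ((((A' p.1 : ℝ) : ℂ) - Complex.I * ((A p.1 / R : ℝ) : ℂ)))).div_const 4)
  rw [wzbar_eq _ hx hy]
  have hRc : (R : ℂ) ≠ 0 := Complex.ofReal_ne_zero.mpr hR
  push_cast
  linear_combination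
    (-(Complex.exp ((p.2 : ℂ) / (R : ℂ))) * ((A p.1 : ℝ) : ℂ) / (8 * (R : ℂ) ^ 2)) *
      Complex.I_sq

lemma HasDerivAt.congr_fd {f g : ℝ → ℝ} {d e : ℝ} {x : ℝ} (h : HasDerivAt f d x)
    (hfg : g = f) (hde : e = d) : HasDerivAt g e x := hfg ▸ hde ▸ h

set_option maxHeartbeats 1000000 in
/-- φ(x,y) = (R cos(x/R), R sin(x/R), y, R cos(x/R), R sin(x/R), y) into ℝ⁶
satisfies (a) |φ_x|² = |φ_y|² = 2 and ⟨φ_x,φ_y⟩ = 0 (conformal for g = e^{y/R}(dx²+dy²)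
with λ² = 2e^{−y/R}), and (b) each component of λ⁻²·∂φ_z/∂z̄ is annihilated by ∂²/(∂z̄∂z)
while ∂φ_z/∂z̄ ≠ 0. -/
theorem stmt_17 (R : ℝ) (hR : 0 < R) (φ : ℝ × ℝ → Fin 6 → ℝ)
    (hφ : ∀ p : ℝ × ℝ,
      φ p = ![R * Real.cos (p.1 / R), R * Real.sin (p.1 / R), p.2,
              R * Real.cos (p.1 / R), R * Real.sin (p.1 / R), p.2]) :
    (∀ p : ℝ × ℝ,
        (∑ σ, (pdx (fun q => φ q σ) p) ^ 2) = 2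
        ∧ (∑ σ, (pdy (fun q => φ q σ) p) ^ 2) = 2
        ∧ (∑ σ, pdx (fun q => φ q σ) p * pdy (fun q => φ q σ) p) = 0)
    ∧ (∀ (p : ℝ × ℝ) (σ : Fin 6),
        wzbar (wz (fun q => ((Real.exp (q.2 / R) / 2 : ℝ) : ℂ)
          * wzbar (wz (fun r => ((φ r σ : ℝ) : ℂ))) q)) p = 0)
    ∧ (∃ (p : ℝ × ℝ) (σ : Fin 6),
        wzbar (wz (fun r => ((φ r σ : ℝ) : ℂ))) p ≠ 0) := by
  have hR' : R ≠ 0 := ne_of_gt hR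
  have hφ0 : ∀ q : ℝ × ℝ, φ q 0 = R * Real.cos (q.1 / R) := fun q => by rw [hφ q]; rfl
  have hφ1 : ∀ q : ℝ × ℝ, φ q 1 = R * Real.sin (q.1 / R) := fun q => by rw [hφ q]; rfl
  have hφ2 : ∀ q : ℝ × ℝ, φ q 2 = q.2 := fun q => by rw [hφ q]; rfl
  have hφ3 : ∀ q : ℝ × ℝ, φ q 3 = R * Real.cos (q.1 / R) := fun q => by rw [hφ q]; rfl
  have hφ4 : ∀ q : ℝ × ℝ, φ q 4 = R * Real.sin (q.1 / R) := fun q => by rw [hφ q]; rfl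
  have hφ5 : ∀ q : ℝ × ℝ, φ q 5 = q.2 := fun q => by rw [hφ q]; rfl
  -- second-stage keys
  have key0 : wzbar (wz (fun r : ℝ × ℝ => ((R * Real.cos (r.1 / R) : ℝ) : ℂ)))
      = fun q => ((-(Real.cos (q.1 / R) / R) / 4 : ℝ) : ℂ) :=
    inner_comp (fun x => R * Real.cos (x / R)) (fun x => -Real.sin (x / R))
      (fun x => -(Real.cos (x / R) / R)) (fun x => hd_Rcos hR' x)
      (fun x => (hd_sin (R := R) x).neg)
  have key1 : wzbar (wz (fun r : ℝ × ℝ => ((R * Real.sin (r.1 / R) : ℝ) : ℂ)))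
      = fun q => ((-Real.sin (q.1 / R) / R / 4 : ℝ) : ℂ) :=
    inner_comp (fun x => R * Real.sin (x / R)) (fun x => Real.cos (x / R))
      (fun x => -Real.sin (x / R) / R) (fun x => hd_Rsin hR' x)
      (fun x => hd_cos (R := R) x)
  refine ⟨fun p => ?_, fun p σ => ?_, ⟨(0, 0), 0, ?_⟩⟩
  · -- part (a)
    have ex0 : pdx (fun q => φ q 0) p = -Real.sin (p.1 / R) :=
      HasDerivAt.deriv <| (hd_Rcos hR' p.1).congr_of_eventuallyEq
        (Filter.Eventually.of_forall fun t => hφ0 (t, p.2))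
    have ex1 : pdx (fun q => φ q 1) p = Real.cos (p.1 / R) :=
      HasDerivAt.deriv <| (hd_Rsin hR' p.1).congr_of_eventuallyEq
        (Filter.Eventually.of_forall fun t => hφ1 (t, p.2))
    have ex2 : pdx (fun q => φ q 2) p = 0 :=
      HasDerivAt.deriv <| (hasDerivAt_const p.1 p.2).congr_of_eventuallyEq
        (Filter.Eventually.of_forall fun t => hφ2 (t, p.2))
    have ex3 : pdx (fun q => φ q 3) p = -Real.sin (p.1 / R) :=
      HasDerivAt.deriv <| (hd_Rcos hR' p.1).congr_of_eventuallyEq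
        (Filter.Eventually.of_forall fun t => hφ3 (t, p.2))
    have ex4 : pdx (fun q => φ q 4) p = Real.cos (p.1 / R) :=
      HasDerivAt.deriv <| (hd_Rsin hR' p.1).congr_of_eventuallyEq
        (Filter.Eventually.of_forall fun t => hφ4 (t, p.2))
    have ex5 : pdx (fun q => φ q 5) p = 0 :=
      HasDerivAt.deriv <| (hasDerivAt_const p.1 p.2).congr_of_eventuallyEq
        (Filter.Eventually.of_forall fun t => hφ5 (t, p.2))
    have ey0 : pdy (fun q => φ q 0) p = 0 :=
      HasDerivAt.deriv <| (hasDerivAt_const p.2 (R * Real.cos (p.1 / R))).congr_of_eventuallyEq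
        (Filter.Eventually.of_forall fun t => hφ0 (p.1, t))
    have ey1 : pdy (fun q => φ q 1) p = 0 :=
      HasDerivAt.deriv <| (hasDerivAt_const p.2 (R * Real.sin (p.1 / R))).congr_of_eventuallyEq
        (Filter.Eventually.of_forall fun t => hφ1 (p.1, t))
    have ey2 : pdy (fun q => φ q 2) p = 1 :=
      HasDerivAt.deriv <| (hasDerivAt_id p.2).congr_of_eventuallyEq
        (Filter.Eventually.of_forall fun t => hφ2 (p.1, t))
    have ey3 : pdy (fun q => φ q 3) p = 0 :=
      HasDerivAt.deriv <| (hasDerivAt_const p.2 (R * Real.cos (p.1 / R))).congr_of_eventuallyEq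
        (Filter.Eventually.of_forall fun t => hφ3 (p.1, t))
    have ey4 : pdy (fun q => φ q 4) p = 0 :=
      HasDerivAt.deriv <| (hasDerivAt_const p.2 (R * Real.sin (p.1 / R))).congr_of_eventuallyEq
        (Filter.Eventually.of_forall fun t => hφ4 (p.1, t))
    have ey5 : pdy (fun q => φ q 5) p = 1 :=
      HasDerivAt.deriv <| (hasDerivAt_id p.2).congr_of_eventuallyEq
        (Filter.Eventually.of_forall fun t => hφ5 (p.1, t))
    refine ⟨?_, ?_, ?_⟩ <;>
      simp only [Fin.sum_univ_six, ex0, ex1, ex2, ex3, ex4, ex5, ey0, ey1, ey2, ey3, ey4, ey5]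
    · nlinarith [Real.sin_sq_add_cos_sq (p.1 / R)]
    · norm_num
    · ring
  · -- part (b)
    fin_cases σ
    · show wzbar (wz (fun q => ((Real.exp (q.2 / R) / 2 : ℝ) : ℂ)
          * wzbar (wz (fun r => ((φ r 0 : ℝ) : ℂ))) q)) p = 0
      simp only [hφ0, key0]
      exact main_lem hR' (fun x => -(Real.cos (x / R) / R) / 4)
        (fun x => Real.sin (x / R) / (4 * R ^ 2))
        (fun x => (((hd_cos (R := R) x).div_const R).neg.div_const 4).congr_fd rfl (by ring))
        (fun x => ((hd_sin (R := R) x).div_const (4 * R ^ 2)).congr_fd rfl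
          (by ring)) p
    · show wzbar (wz (fun q => ((Real.exp (q.2 / R) / 2 : ℝ) : ℂ)
          * wzbar (wz (fun r => ((φ r 1 : ℝ) : ℂ))) q)) p = 0
      simp only [hφ1, key1]
      exact main_lem hR' (fun x => -Real.sin (x / R) / R / 4)
        (fun x => -Real.cos (x / R) / (4 * R ^ 2))
        (fun x => (((hd_sin (R := R) x).neg.div_const R).div_const 4).congr_fd rfl (by ring))
        (fun x => ((hd_cos (R := R) x).neg.div_const (4 * R ^ 2)).congr_fd rfl
          (by ring)) p
    · show wzbar (wz (fun q => ((Real.exp (q.2 / R) / 2 : ℝ) : ℂ)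
          * wzbar (wz (fun r => ((φ r 2 : ℝ) : ℂ))) q)) p = 0
      simp only [hφ2, inner_y, mul_zero]
      exact wzbar_wz_zero p
    · show wzbar (wz (fun q => ((Real.exp (q.2 / R) / 2 : ℝ) : ℂ)
          * wzbar (wz (fun r => ((φ r 3 : ℝ) : ℂ))) q)) p = 0
      simp only [hφ3, key0]
      exact main_lem hR' (fun x => -(Real.cos (x / R) / R) / 4)
        (fun x => Real.sin (x / R) / (4 * R ^ 2))
        (fun x => (((hd_cos (R := R) x).div_const R).neg.div_const 4).congr_fd rfl (by ring))
        (fun x => ((hd_sin (R := R) x).div_const (4 * R ^ 2)).congr_fd rfl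
          (by ring)) p
    · show wzbar (wz (fun q => ((Real.exp (q.2 / R) / 2 : ℝ) : ℂ)
          * wzbar (wz (fun r => ((φ r 4 : ℝ) : ℂ))) q)) p = 0
      simp only [hφ4, key1]
      exact main_lem hR' (fun x => -Real.sin (x / R) / R / 4)
        (fun x => -Real.cos (x / R) / (4 * R ^ 2))
        (fun x => (((hd_sin (R := R) x).neg.div_const R).div_const 4).congr_fd rfl (by ring))
        (fun x => ((hd_cos (R := R) x).neg.div_const (4 * R ^ 2)).congr_fd rfl
          (by ring)) p
    · show wzbar (wz (fun q => ((Real.exp (q.2 / R) / 2 : ℝ) : ℂ)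
          * wzbar (wz (fun r => ((φ r 5 : ℝ) : ℂ))) q)) p = 0
      simp only [hφ5, inner_y, mul_zero]
      exact wzbar_wz_zero p
  · -- existence
    simp only [hφ0, key0]
    norm_num [hR']
end
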